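/- With notation as above, (∇_ξ Φ)(ξ, e_k) = -g(∇_ξ ξ, ξ × e_k) for each k, and hence the invariant i₁₆(∇Φ) = Σ_k ((∇_ξ Φ)(ξ, e_k))² vanishes if and only if ∇_ξ ξ = 0. -/

import Mathlib

open scoped RealInnerProductSpace

/-- With notation as in Statement 5,
`(∇_ξ Φ)(ξ, e_k) = -g(∇_ξ ξ, ξ × e_k)` for each `k`, hence
`i₁₆(∇Φ) = Σ_k ((∇_ξ Φ)(ξ, e_k))²` vanishes iff `∇_ξ ξ = 0`. -/
theorem i16_vanishes_iff
    {V : Type*} [NormedAddCommGroup V] [InnerProductSpace ℝ V]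
    (cross : V → V → V)
    (hanti : ∀ x y : V, cross x y = - cross y x)
    (hskew : ∀ x y z : V, ⟪cross x y, z⟫ = - ⟪cross x z, y⟫)
    (nabla : V → V → V) (D : V → ℝ → ℝ)
    (hD0 : ∀ x, D x 0 = 0) (hD1 : ∀ x, D x 1 = 0)
    (hDg : ∀ x y z : V, D x ⟪y, z⟫ = ⟪nabla x y, z⟫ + ⟪y, nabla x z⟫)
    (ξ : V) (e : Fin 6 → V)
    (hON : Orthonormal ℝ (Fin.snoc e ξ : Fin 7 → V))
    -- `{ξ × e_k}` spans the orthogonal complement of `ξ`: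
    (hspan : ∀ w : V, ⟪w, ξ⟫ = 0 → (∀ k, ⟪w, cross ξ (e k)⟫ = 0) → w = 0)
    (Φ : V → V → ℝ) (hΦ : ∀ x y, Φ x y = ⟪x, cross ξ y⟫)
    (nablaPhi : V → V → V → ℝ)
    (hnablaPhi : ∀ x y z, nablaPhi x y z
      = D x (Φ y z) - Φ (nabla x y) z - Φ y (nabla x z)) :
    (∀ k, nablaPhi ξ ξ (e k) = - ⟪nabla ξ ξ, cross ξ (e k)⟫) ∧
    ((∑ k : Fin 6, (nablaPhi ξ ξ (e k)) ^ 2 = 0) ↔ nabla ξ ξ = 0) := by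
  -- cross ξ ξ = 0
  have hcc : cross ξ ξ = 0 := by
    have h := hanti ξ ξ
    have h2 : (2 : ℝ) • cross ξ ξ = 0 := by
      rw [two_smul]; nth_rewrite 2 [h]; abel
    simpa using (smul_eq_zero.mp h2).resolve_left (by norm_num)
  -- ⟪ξ, cross ξ z⟫ = 0 for all z
  have hxicz : ∀ z : V, ⟪ξ, cross ξ z⟫ = 0 := by
    intro z
    have h1 : ⟪cross ξ z, ξ⟫ = - ⟪cross ξ ξ, z⟫ := hskew ξ z ξ
    rw [hcc, inner_zero_left, neg_zero] at h1
    rw [real_inner_comm, h1]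
  have hkey : ∀ k, nablaPhi ξ ξ (e k) = - ⟪nabla ξ ξ, cross ξ (e k)⟫ := by
    intro k
    rw [hnablaPhi, hΦ, hΦ, hΦ, hxicz, hxicz, hD0]
    ring
  refine ⟨hkey, ?_⟩
  constructor
  · intro hsum
    have hterms : ∀ k : Fin 6, (nablaPhi ξ ξ (e k)) ^ 2 = 0 := by
      intro k
      have := Finset.sum_eq_zero_iff_of_nonneg
        (fun i _ => sq_nonneg (nablaPhi ξ ξ (e i))) |>.mp hsum k (Finset.mem_univ k)
      exact this
    have hortho : ∀ k, ⟪nabla ξ ξ, cross ξ (e k)⟫ = 0 := by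
      intro k
      have h := hterms k
      rw [hkey k] at h
      have := pow_eq_zero_iff (n := 2) (by norm_num) |>.mp h
      linarith [neg_eq_zero.mp this]
    have hnorm : ‖ξ‖ = 1 := by
      have := hON.1 (Fin.last 6)
      rw [Fin.snoc_last] at this; exact this
    have hxx : ⟪ξ, ξ⟫ = (1 : ℝ) := by
      rw [real_inner_self_eq_norm_mul_norm, hnorm]; ring
    have hperp : ⟪nabla ξ ξ, ξ⟫ = 0 := by
      have h := hDg ξ ξ ξ
      rw [hxx, hD1] at h
      have : ⟪ξ, nabla ξ ξ⟫ = ⟪nabla ξ ξ, ξ⟫ := real_inner_comm _ _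
      linarith
    exact hspan _ hperp hortho
  · intro h
    apply Finset.sum_eq_zero
    intro k _
    rw [hkey k, h, inner_zero_left]
    ring
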